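/- Let n ≥ 1 and let η ∈ ℚ_α(x) be such that η(α_i) is well-defined and nonzero for every i. If F, F′ ∈ H_α⟪ħ⟫[[q]] satisfy F(α_i,ħ,q), F′(α_i,ħ,q) ∈ ℚ_α(ħ)[[q]] for every i ∈ {1,…,n}, then the pair (F,F′) satisfies the η-MPC if and only if the pair (F′,F) satisfies the η-MPC. -/

import Mathlib

/-!
Setting: `Kf n = ℚ(α₁,…,αₙ)` is the field of rational functions in `n` variables over `ℚ`,
`Lf n = ℚ_α⟪ħ⟫` is the algebra of Laurent series in `ħ⁻¹` (modeled as Laurent series in the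
variable `t = ħ⁻¹`, so that the coefficient of `ħ^r` is the Hahn-series coefficient at `-r`).
An element `F ∈ H_α⟪ħ⟫[[q]]` is modeled by its `n` evaluations `F : Fin n → PowerSeries (Lf n)`
(by the Chinese remainder theorem, `H_α ≅ ∏ᵢ ℚ_α` via `x ↦ (αᵢ)ᵢ`, so this is faithful).
-/

open scoped Classical
set_option synthInstance.maxHeartbeats 1000000
set_option maxHeartbeats 1000000

noncomputable section

namespace SQ

/-- The field `ℚ_α = ℚ(α₁,…,αₙ)`. -/
abbrev Kf (n : ℕ) : Type := FractionRing (MvPolynomial (Fin n) ℚ)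

/-- The element `αᵢ ∈ ℚ_α`. -/
def alpha (n : ℕ) (i : Fin n) : Kf n :=
  algebraMap (MvPolynomial (Fin n) ℚ) (Kf n) (MvPolynomial.X i)

/-- `ℚ_α⟪ħ⟫`: Laurent series in `t = ħ⁻¹`. -/
abbrev Lf (n : ℕ) : Type := LaurentSeries (Kf n)

/-- `ħ = t⁻¹` where `t` is the Laurent-series variable. -/
def hbar (n : ℕ) : Lf n := HahnSeries.single (-1 : ℤ) 1

/-- The substitution `ħ ↦ −ħ` on `ℚ_α⟪ħ⟫`. -/
def negH (n : ℕ) (x : Lf n) : Lf n :=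
  ⟨fun a => (-1 : Kf n) ^ a * x.coeff a,
    x.isPWO_support'.mono fun a ha => by
      simp only [Function.mem_support] at ha ⊢
      exact fun h => ha (by rw [h, mul_zero])⟩

/-- `x ∈ ℚ_α⟪ħ⟫` lies in (the image of) `ℚ_α(ħ)`, i.e. `Q(ħ)·x = P(ħ)` for some polynomials
`P, Q` with `Q ≠ 0`. -/
def IsRatH (n : ℕ) (x : Lf n) : Prop :=
  ∃ P Q : Polynomial (Kf n), Q ≠ 0 ∧
    Polynomial.aeval (hbar n) Q * x = Polynomial.aeval (hbar n) P

/-- `x ∈ ℚ_α⟪ħ⟫` is a rational function of `ħ`, regular at `ħ = c`, with value `v` there. -/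
def RegEvalAt (n : ℕ) (x : Lf n) (c v : Kf n) : Prop :=
  ∃ P Q : Polynomial (Kf n), Polynomial.eval c Q ≠ 0 ∧
    Polynomial.aeval (hbar n) Q * x = Polynomial.aeval (hbar n) P ∧
    v = Polynomial.eval c P / Polynomial.eval c Q

/-- `x` is a rational function of `ħ` regular at `ħ = c`. -/
def RegAt (n : ℕ) (x : Lf n) (c : Kf n) : Prop := ∃ v : Kf n, RegEvalAt n x c v

/-- `x` is a Laurent polynomial in `ħ`, i.e. an element of `ℚ_α[ħ,ħ⁻¹]`. -/
def IsLaurentPolyH (n : ℕ) (x : Lf n) : Prop := x.support.Finite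

/-- `x` is a polynomial in `ħ`, i.e. an element of `ℚ_α[ħ]`. -/
def IsPolyH (n : ℕ) (x : Lf n) : Prop :=
  ∃ P : Polynomial (Kf n), x = Polynomial.aeval (hbar n) P

/-- Definition 5.1 (`C`-recursivity).  `C d i j` is the structure constant `C_i^j(d)`
(only the values with `d ≥ 1` and `j ≠ i` are used). -/
def CRecursive (n : ℕ) (C : ℕ → Fin n → Fin n → Kf n)
    (F : Fin n → PowerSeries (Lf n)) : Prop :=
  ∀ dstar : ℕ,
    (∀ d : ℕ, 1 ≤ d → d ≤ dstar → ∀ i : Fin n,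
        IsRatH n (PowerSeries.coeff (R := Lf n) (dstar - d) (F i))) →
    (∀ d : ℕ, 1 ≤ d → d < dstar → ∀ i j : Fin n, i ≠ j →
        RegAt n (PowerSeries.coeff (R := Lf n) d (F i))
          ((alpha n i - alpha n j) / (d : Kf n))) →
    ∀ i : Fin n, ∃ v : ℕ → Fin n → Kf n,
      (∀ d : ℕ, ∀ j : Fin n, 1 ≤ d → d ≤ dstar → j ≠ i →
          RegEvalAt n (PowerSeries.coeff (R := Lf n) (dstar - d) (F j))
            ((alpha n j - alpha n i) / (d : Kf n)) (v d j)) ∧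
      IsLaurentPolyH n
        (PowerSeries.coeff (R := Lf n) dstar (F i)
          - ∑ d ∈ Finset.Icc 1 dstar, ∑ j ∈ Finset.univ.erase i,
              algebraMap (Kf n) (Lf n) (C d i j)
                * (hbar n
                    - algebraMap (Kf n) (Lf n)
                        ((alpha n j - alpha n i) / (d : Kf n)))⁻¹
                * algebraMap (Kf n) (Lf n) (v d j))

/-- The coefficient of `z^a q^D` in
`Φ^η_{F,F′}(ħ,z,q) = ∑ᵢ (η(αᵢ) e^{αᵢ z} / ∏_{k≠i}(αᵢ−α_k)) F(αᵢ,ħ,q e^{ħz}) F′(αᵢ,−ħ,q)`.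
(Only the values `η(αᵢ)` of the rational function `η` enter the definition, so `η` is
represented by its tuple of values `eta : Fin n → Kf n`.) -/
def PhiCoeff (n : ℕ) (eta : Fin n → Kf n) (F F' : Fin n → PowerSeries (Lf n))
    (a D : ℕ) : Lf n :=
  ∑ i : Fin n, ∑ d ∈ Finset.range (D + 1), ∑ m ∈ Finset.range (a + 1),
    algebraMap (Kf n) (Lf n)
        (eta i / (∏ k ∈ Finset.univ.erase i, (alpha n i - alpha n k))
          * (alpha n i ^ m / (Nat.factorial m : Kf n))
          * ((d : Kf n) ^ (a - m) / (Nat.factorial (a - m) : Kf n)))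
      * hbar n ^ (a - m)
      * PowerSeries.coeff (R := Lf n) d (F i)
      * negH n (PowerSeries.coeff (R := Lf n) (D - d) (F' i))

/-- The η mutual polynomiality condition: every coefficient of `z^a q^D` of `Φ^η_{F,F′}`
is a polynomial in `ħ`. -/
def MPC (n : ℕ) (eta : Fin n → Kf n) (F F' : Fin n → PowerSeries (Lf n)) : Prop :=
  ∀ a D : ℕ, IsPolyH n (PhiCoeff n eta F F' a D)

section AuxLemmas
variable (n : ℕ)

lemma negH_coeff (x : Lf n) (a : ℤ) : (negH n x).coeff a = (-1 : Kf n) ^ a * x.coeff a := rfl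

lemma negH_support (x : Lf n) : (negH n x).support = x.support := by
  ext a
  simp only [HahnSeries.mem_support, negH_coeff, mul_ne_zero_iff]
  exact ⟨fun h => h.2, fun h => ⟨zpow_ne_zero _ (by norm_num), h⟩⟩

lemma negH_add (x y : Lf n) : negH n (x + y) = negH n x + negH n y := by
  ext a
  simp [negH_coeff, mul_add]

lemma negH_one : negH n 1 = 1 := by
  ext a
  simp only [negH_coeff, HahnSeries.coeff_one]
  split <;> simp_all

lemma negH_mul (x y : Lf n) : negH n (x * y) = negH n x * negH n y := by
  ext a
  have hA : Finset.antidiagonal (negH n x).isPWO_support (negH n y).isPWO_support a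
      = Finset.antidiagonal x.isPWO_support y.isPWO_support a := by
    ext ij
    simp only [Finset.mem_antidiagonal, HahnSeries.mem_support, negH_support,
      HahnSeries.mem_support]
  rw [negH_coeff, HahnSeries.coeff_mul, HahnSeries.coeff_mul, hA, Finset.mul_sum]
  refine Finset.sum_congr rfl fun ij hij => ?_
  rw [Finset.mem_antidiagonal] at hij
  rw [negH_coeff, negH_coeff, ← hij.2.2, zpow_add₀ (by norm_num : (-1 : Kf n) ≠ 0)]
  ring

lemma algebraMap_coeff (c : Kf n) (a : ℤ) :
    ((algebraMap (Kf n) (Lf n)) c).coeff a = if a = 0 then c else 0 := by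
  rw [HahnSeries.algebraMap_apply']
  simp [PowerSeries.algebraMap_apply, HahnSeries.ofPowerSeries_C, HahnSeries.C_apply,
    HahnSeries.coeff_single]

/-- `negH` as an algebra homomorphism. -/
def negA (n : ℕ) : Lf n →ₐ[Kf n] Lf n where
  toFun := negH n
  map_one' := negH_one n
  map_mul' := negH_mul n
  map_zero' := by ext a; simp [negH_coeff]
  map_add' := negH_add n
  commutes' := fun c => by
    ext a
    show (negH _ _).coeff a = _
    rw [negH_coeff, algebraMap_coeff]
    split
    · next h => subst h; simp
    · simp

lemma negA_apply (x : Lf n) : negA n x = negH n x := rfl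

lemma negA_hbar : negA n (hbar n) = -(hbar n) := by
  ext a
  rw [negA_apply, negH_coeff]
  simp only [hbar, HahnSeries.coeff_neg, HahnSeries.coeff_single]
  split
  · next h => subst h; norm_num
  · simp

lemma negA_negA (x : Lf n) : negA n (negA n x) = x := by
  ext a
  rw [negA_apply, negA_apply, negH_coeff, negH_coeff, ← mul_assoc, ← mul_zpow]
  norm_num

lemma binom {K : Type*} [Field K] [CharZero K] (x y : K) (N : ℕ) :
    ∑ m ∈ Finset.range (N + 1),
        x ^ m / (Nat.factorial m : K) * (y ^ (N - m) / (Nat.factorial (N - m) : K))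
      = (x + y) ^ N / (Nat.factorial N : K) := by
  rw [add_pow, Finset.sum_div]
  refine Finset.sum_congr rfl fun m hm => ?_
  rw [Finset.mem_range] at hm
  have hm' : m ≤ N := by omega
  rw [Nat.cast_choose K hm']
  have h1 : (Nat.factorial m : K) ≠ 0 := Nat.cast_ne_zero.2 (Nat.factorial_ne_zero m)
  have h2 : (Nat.factorial (N - m) : K) ≠ 0 := Nat.cast_ne_zero.2 (Nat.factorial_ne_zero _)
  have h3 : (Nat.factorial N : K) ≠ 0 := Nat.cast_ne_zero.2 (Nat.factorial_ne_zero N)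
  field_simp

lemma sum_triangle {M : Type*} [AddCommMonoid M] (a : ℕ) (t : ℕ → ℕ → M) :
    ∑ m ∈ Finset.range (a + 1), ∑ k ∈ Finset.range (a - m + 1), t m k
      = ∑ k ∈ Finset.range (a + 1), ∑ m ∈ Finset.range (a - k + 1), t m k := by
  have key : ∀ u : ℕ → ℕ → M,
      ∑ m ∈ Finset.range (a + 1), ∑ k ∈ Finset.range (a - m + 1), u m k
        = ∑ m ∈ Finset.range (a + 1), ∑ k ∈ Finset.range (a + 1),
            if m + k ≤ a then u m k else 0 := by
    intro u
    refine Finset.sum_congr rfl fun m hm => ?_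
    rw [Finset.mem_range] at hm
    have h1 : ∑ k ∈ Finset.range (a - m + 1), u m k
        = ∑ k ∈ Finset.range (a - m + 1), if m + k ≤ a then u m k else 0 :=
      Finset.sum_congr rfl fun k hk =>
        (if_pos (by rw [Finset.mem_range] at hk; omega)).symm
    rw [h1]
    exact Finset.sum_subset (Finset.range_subset_range.2 (by omega)) fun k hk hk' =>
      if_neg (by simp only [Finset.mem_range] at hk hk'; omega)
  rw [key, key, Finset.sum_comm]
  exact Finset.sum_congr rfl fun k _ => Finset.sum_congr rfl fun m _ => by
    rw [Nat.add_comm]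

lemma inner_swap (n : ℕ) (c al : Kf n) (x y : Lf n) (a d D : ℕ) (hdD : d ≤ D) :
    ∑ m ∈ Finset.range (a + 1), ∑ k ∈ Finset.range (a - m + 1),
        algebraMap (Kf n) (Lf n) ((D : Kf n) ^ m / (Nat.factorial m : Kf n)) * hbar n ^ m
          * negA n
              (algebraMap (Kf n) (Lf n)
                  (c * (al ^ k / (Nat.factorial k : Kf n))
                    * ((d : Kf n) ^ (a - m - k) / (Nat.factorial (a - m - k) : Kf n)))
                * hbar n ^ (a - m - k) * x * negA n y)
      = ∑ k ∈ Finset.range (a + 1),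
          algebraMap (Kf n) (Lf n)
              (c * (al ^ k / (Nat.factorial k : Kf n))
                * (((D - d : ℕ) : Kf n) ^ (a - k) / (Nat.factorial (a - k) : Kf n)))
            * hbar n ^ (a - k) * negA n x * y := by
  calc
    ∑ m ∈ Finset.range (a + 1), ∑ k ∈ Finset.range (a - m + 1),
        algebraMap (Kf n) (Lf n) ((D : Kf n) ^ m / (Nat.factorial m : Kf n)) * hbar n ^ m
          * negA n
              (algebraMap (Kf n) (Lf n)
                  (c * (al ^ k / (Nat.factorial k : Kf n))
                    * ((d : Kf n) ^ (a - m - k) / (Nat.factorial (a - m - k) : Kf n)))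
                * hbar n ^ (a - m - k) * x * negA n y)
      = ∑ m ∈ Finset.range (a + 1), ∑ k ∈ Finset.range (a - m + 1),
          algebraMap (Kf n) (Lf n)
              ((D : Kf n) ^ m / (Nat.factorial m : Kf n)
                * (c * (al ^ k / (Nat.factorial k : Kf n)))
                * ((-(d : Kf n)) ^ (a - m - k) / (Nat.factorial (a - m - k) : Kf n)))
            * hbar n ^ (a - k) * negA n x * y := by
        refine Finset.sum_congr rfl fun m hm => Finset.sum_congr rfl fun k hk => ?_
        rw [Finset.mem_range] at hm hk
        rw [map_mul (negA n), map_mul (negA n), map_mul (negA n), map_pow,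
          AlgHom.commutes, negA_hbar, negA_negA]
        rw [show a - k = m + (a - m - k) from by omega, pow_add]
        rw [neg_pow (hbar n), neg_pow ((d : Kf n))]
        simp only [map_mul, map_div₀, map_pow, map_neg, map_one, map_natCast]
        ring
    _ = ∑ k ∈ Finset.range (a + 1), ∑ m ∈ Finset.range (a - k + 1),
          algebraMap (Kf n) (Lf n)
              ((D : Kf n) ^ m / (Nat.factorial m : Kf n)
                * (c * (al ^ k / (Nat.factorial k : Kf n)))
                * ((-(d : Kf n)) ^ (a - m - k) / (Nat.factorial (a - m - k) : Kf n)))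
            * hbar n ^ (a - k) * negA n x * y := sum_triangle a _
    _ = ∑ k ∈ Finset.range (a + 1),
          algebraMap (Kf n) (Lf n)
              (c * (al ^ k / (Nat.factorial k : Kf n))
                * (((D - d : ℕ) : Kf n) ^ (a - k) / (Nat.factorial (a - k) : Kf n)))
            * hbar n ^ (a - k) * negA n x * y := by
        refine Finset.sum_congr rfl fun k hk => ?_
        have harg : ∑ m ∈ Finset.range (a - k + 1),
            ((D : Kf n) ^ m / (Nat.factorial m : Kf n)
              * (c * (al ^ k / (Nat.factorial k : Kf n)))
              * ((-(d : Kf n)) ^ (a - m - k) / (Nat.factorial (a - m - k) : Kf n)))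
            = c * (al ^ k / (Nat.factorial k : Kf n))
              * (((D - d : ℕ) : Kf n) ^ (a - k) / (Nat.factorial (a - k) : Kf n)) := by
          have e : ∑ m ∈ Finset.range (a - k + 1),
              ((D : Kf n) ^ m / (Nat.factorial m : Kf n)
                * (c * (al ^ k / (Nat.factorial k : Kf n)))
                * ((-(d : Kf n)) ^ (a - m - k) / (Nat.factorial (a - m - k) : Kf n)))
              = (c * (al ^ k / (Nat.factorial k : Kf n)))
                * ∑ m ∈ Finset.range (a - k + 1),
                    (D : Kf n) ^ m / (Nat.factorial m : Kf n)
                      * ((-(d : Kf n)) ^ (a - k - m)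
                          / (Nat.factorial (a - k - m) : Kf n)) := by
            rw [Finset.mul_sum]
            refine Finset.sum_congr rfl fun m hm => ?_
            rw [Nat.sub_right_comm]
            ring
          rw [e, binom]
          have hc : (D : Kf n) + -(d : Kf n) = ((D - d : ℕ) : Kf n) := by
            rw [Nat.cast_sub hdD]
            ring
          rw [hc]
        rw [← Finset.sum_mul, ← Finset.sum_mul, ← Finset.sum_mul, ← map_sum, harg]

lemma phi_swap (n : ℕ) (eta : Fin n → Kf n) (F F' : Fin n → PowerSeries (Lf n)) (a D : ℕ) :
    PhiCoeff n eta F' F a D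
      = ∑ m ∈ Finset.range (a + 1),
          algebraMap (Kf n) (Lf n) ((D : Kf n) ^ m / (Nat.factorial m : Kf n)) * hbar n ^ m
            * negH n (PhiCoeff n eta F F' (a - m) D) := by
  unfold PhiCoeff
  simp only [show negH n = ⇑(negA n) from rfl]
  simp only [map_sum, Finset.mul_sum]
  conv_rhs => rw [Finset.sum_comm]
  refine Finset.sum_congr rfl fun i _ => ?_
  conv_rhs => rw [Finset.sum_comm]
  conv_lhs => rw [← Finset.sum_range_reflect]
  simp only [Nat.add_sub_cancel]
  refine Finset.sum_congr rfl fun d hd => ?_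
  rw [Finset.mem_range] at hd
  have hdD : d ≤ D := by omega
  rw [inner_swap n (eta i / (∏ k ∈ Finset.univ.erase i, (alpha n i - alpha n k)))
    (alpha n i) (PowerSeries.coeff (R := Lf n) d (F i)) (PowerSeries.coeff (R := Lf n) (D - d) (F' i))
    a d D hdD]
  refine Finset.sum_congr rfl fun k _ => ?_
  rw [show D - (D - d) = d from by omega]
  ring



lemma mpc_swap (n : ℕ) (eta : Fin n → Kf n) (F F' : Fin n → PowerSeries (Lf n)) :
    MPC n eta F F' → MPC n eta F' F := by
  intro hM a D
  rw [phi_swap]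
  choose P hP using fun m => hM m D
  refine ⟨∑ m ∈ Finset.range (a + 1),
      Polynomial.C ((D : Kf n) ^ m / (Nat.factorial m : Kf n)) * Polynomial.X ^ m
        * ((P (a - m)).comp (-Polynomial.X)), ?_⟩
  rw [map_sum]
  refine Finset.sum_congr rfl fun m _ => ?_
  have h1 : Polynomial.aeval (hbar n) ((P (a - m)).comp (-Polynomial.X))
      = negA n (Polynomial.aeval (hbar n) (P (a - m))) := by
    rw [Polynomial.aeval_comp, map_neg, Polynomial.aeval_X, ← negA_hbar,
      Polynomial.aeval_algHom_apply]
  rw [hP (a - m)]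
  show _ * _ * negA n _ = _
  rw [map_mul, map_mul, Polynomial.aeval_C, map_pow, Polynomial.aeval_X, h1]


end AuxLemmas

/-- if all `q`-coefficients of each `F(αᵢ,ħ,q)` and each `F′(αᵢ,ħ,q)` are
rational functions of `ħ`, then `(F,F′)` satisfies the `η`-MPC iff `(F′,F)` does. -/
theorem statement4 (n : ℕ) (hn : 1 ≤ n)
    (eta : Fin n → Kf n) (heta : ∀ i : Fin n, eta i ≠ 0)
    (F F' : Fin n → PowerSeries (Lf n))
    (hF : ∀ (i : Fin n) (d : ℕ), IsRatH n (PowerSeries.coeff (R := Lf n) d (F i)))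
    (hF' : ∀ (i : Fin n) (d : ℕ), IsRatH n (PowerSeries.coeff (R := Lf n) d (F' i))) :
    MPC n eta F F' ↔ MPC n eta F' F :=
  ⟨fun h => mpc_swap n eta F F' h, fun h => mpc_swap n eta F' F h⟩

end SQ
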